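/- Let q = p^n be an odd prime power, K = Q(ζ_{q-1}, ζ_p), and let 𝔭 be a prime ideal of the ring of integers of K above p, so that O_K/𝔭 ≅ F_q. Let χ_𝔭 be the Teichmüller character of 𝔭 (so χ_𝔭(x) ≡ x mod 𝔭 for all x ∈ F_q). For integers 1 ≤ a, b ≤ q-2, the Jacobi sum satisfies J_q(χ_𝔭^{-a}, χ_𝔭^{-b}) ≡ -binom(a+b, a) (mod 𝔭); in particular if a + b ≥ q then J_q(χ_𝔭^{-a}, χ_𝔭^{-b}) ≡ 0 (mod 𝔭). -/

import Mathlib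

set_option synthInstance.maxHeartbeats 1000000
set_option maxHeartbeats 1000000

open Finset in
private lemma sum_pow_aux (F : Type*) [Field F] [Fintype F] (m : ℕ) (hm : m ≠ 0) :
    ∑ x : F, x ^ m = if Fintype.card F - 1 ∣ m then -1 else 0 := by
  classical
  let φ : Fˣ ↪ F := ⟨fun x ↦ x, fun _ _ h => Units.ext h⟩
  have huniv : (univ : Finset Fˣ).map φ = univ \ {0} := by
    ext x
    simp only [mem_map, mem_univ, Function.Embedding.coeFn_mk, true_and, mem_sdiff,
      mem_singleton, φ]; exact isUnit_iff_ne_zero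
  calc
    ∑ x : F, x ^ m = ∑ x ∈ univ \ {(0 : F)}, x ^ m := by
      rw [← sum_sdiff ({0} : Finset F).subset_univ, sum_singleton, zero_pow hm, add_zero]
    _ = ∑ x : Fˣ, (x ^ m : F) := by simp [φ, ← huniv, univ.sum_map φ]; rfl
    _ = _ := FiniteField.sum_pow_units F m

private lemma expand_pow {F : Type*} [Field F] (N : ℕ) (y : F) :
    (1 - y) ^ N = ∑ k ∈ Finset.range (N + 1), (-1) ^ k * y ^ k * (N.choose k : F) := by
  rw [sub_eq_add_neg, add_comm, add_pow]
  refine Finset.sum_congr rfl fun k _ => ?_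
  rw [one_pow, neg_pow]
  ring

private lemma field_sum_eq {F : Type*} [Field F] [Fintype F] {q a b : ℕ}
    (hq : Fintype.card F = q) (hqodd : Odd q)
    (ha1 : 1 ≤ a) (ha2 : a ≤ q - 2) (hb1 : 1 ≤ b) (hb2 : b ≤ q - 2) :
    ∑ x : F, x ^ (q - 1 - a) * (1 - x) ^ (q - 1 - b) = -((a + b).choose a : F) := by
  classical
  obtain ⟨q2, hq2⟩ := hqodd
  have hq3 : 3 ≤ q := by omega
  set u := q - 1 - a with hu
  set v := q - 1 - b with hv
  have hu0 : u ≠ 0 := by omega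
  have hv0 : v ≠ 0 := by omega
  -- Step 1: reindex by the bijection y ↦ (1 - y)⁻¹
  have hre : ∑ x : F, x ^ u * (1 - x) ^ v
      = ∑ y : F, (-1 : F) ^ b * (y ^ v * (1 - y) ^ (a + b)) := by
    refine (Fintype.sum_bijective (fun y : F => (1 - y)⁻¹)
      ⟨Function.LeftInverse.injective (g := fun x : F => 1 - x⁻¹) fun y => by simp,
       Function.RightInverse.surjective (g := fun x : F => 1 - x⁻¹) fun x => by simp⟩
      _ _ fun y => ?_).symm
    show (-1 : F) ^ b * (y ^ v * (1 - y) ^ (a + b)) = (1 - y)⁻¹ ^ u * (1 - (1 - y)⁻¹) ^ v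
    by_cases hy : y = 1
    · subst hy
      simp [zero_pow hu0, zero_pow (show a + b ≠ 0 by omega)]
    · have hz : (1 : F) - y ≠ 0 := sub_ne_zero.mpr (Ne.symm hy)
      have h1 : 1 - (1 - y)⁻¹ = -y * (1 - y)⁻¹ := by
        field_simp
        ring
      have hzpow : ((1 - y)⁻¹) ^ (u + v) = (1 - y) ^ (a + b) := by
        have hcard : (1 - y) ^ (q - 1) = 1 := by
          rw [← hq]; exact FiniteField.pow_card_sub_one_eq_one _ hz
        have hone : (1 - y) ^ (u + v) * (1 - y) ^ (a + b) = 1 := by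
          rw [← pow_add, show (u + v) + (a + b) = (q - 1) * 2 by omega, pow_mul, hcard, one_pow]
        rw [inv_pow]
        exact inv_eq_of_mul_eq_one_right hone
      have hsign : (-1 : F) ^ v = (-1) ^ b := by
        have hmod : v % 2 = b % 2 := by omega
        rw [neg_one_pow_eq_pow_mod_two, hmod, ← neg_one_pow_eq_pow_mod_two]
      have hnegy : (-y : F) ^ v = (-1) ^ b * y ^ v := by rw [neg_pow, hsign]
      rw [h1, mul_pow, hnegy, ← hzpow, pow_add]
      ring
  -- Step 2: expand and evaluate
  rw [hre]
  calc ∑ y : F, (-1 : F) ^ b * (y ^ v * (1 - y) ^ (a + b))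
      = ∑ y : F, ∑ k ∈ Finset.range (a + b + 1),
          ((-1 : F) ^ b * (-1) ^ k * ((a + b).choose k : F)) * y ^ (v + k) := by
        refine Finset.sum_congr rfl fun y _ => ?_
        rw [expand_pow]
        simp only [Finset.mul_sum]
        refine Finset.sum_congr rfl fun k _ => ?_
        rw [pow_add]; ring
    _ = ∑ k ∈ Finset.range (a + b + 1),
          ((-1 : F) ^ b * (-1) ^ k * ((a + b).choose k : F)) * ∑ y : F, y ^ (v + k) := by
        rw [Finset.sum_comm]
        exact Finset.sum_congr rfl fun k _ => (Finset.mul_sum _ _ _).symm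
    _ = ∑ k ∈ Finset.range (a + b + 1),
          (if k = b then -(((a + b).choose b : F)) else 0) := by
        refine Finset.sum_congr rfl fun k hk => ?_
        have hkmem : k ≤ a + b := by
          have := Finset.mem_range.mp hk; omega
        rw [sum_pow_aux F (v + k) (by omega), hq]
        by_cases hkb : k = b
        · subst hkb
          rw [if_pos ⟨1, by omega⟩, if_pos rfl]
          have hbb : (-1 : F) ^ k * (-1) ^ k = 1 := by
            rw [← pow_add]; exact Even.neg_one_pow ⟨k, rfl⟩
          calc (-1 : F) ^ k * (-1) ^ k * ((a + k).choose k : F) * -1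
              = ((-1 : F) ^ k * (-1) ^ k) * (-(((a + k).choose k : F))) := by ring
            _ = -(((a + k).choose k : F)) := by rw [hbb, one_mul]
        · rw [if_neg hkb, if_neg, mul_zero]
          intro hdvd
          have h1 : q - 1 ≤ v + k := Nat.le_of_dvd (by omega) hdvd
          have h2 : (q - 1) ∣ (v + k - (q - 1)) := Nat.dvd_sub hdvd dvd_rfl
          have h3 : v + k - (q - 1) < q - 1 := by omega
          have h4 : v + k - (q - 1) = 0 := Nat.eq_zero_of_dvd_of_lt h2 h3
          omega
    _ = -(((a + b).choose b : F)) := by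
        rw [Finset.sum_ite_eq' _ b fun _ => -(((a + b).choose b : F)),
          if_pos (Finset.mem_range.mpr (by omega))]
    _ = -(((a + b).choose a : F)) := by rw [← Nat.choose_symm_add]

private lemma field_sum_eq_zero {F : Type*} [Field F] [Fintype F] {q a b : ℕ}
    (hq : Fintype.card F = q)
    (ha1 : 1 ≤ a) (ha2 : a ≤ q - 2) (hb1 : 1 ≤ b) (hb2 : b ≤ q - 2) (hab : q ≤ a + b) :
    ∑ x : F, x ^ (q - 1 - a) * (1 - x) ^ (q - 1 - b) = 0 := by
  classical
  set u := q - 1 - a with hu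
  set v := q - 1 - b with hv
  calc ∑ x : F, x ^ u * (1 - x) ^ v
      = ∑ x : F, ∑ k ∈ Finset.range (v + 1),
          ((-1 : F) ^ k * (v.choose k : F)) * x ^ (u + k) := by
        refine Finset.sum_congr rfl fun x _ => ?_
        rw [expand_pow]
        simp only [Finset.mul_sum]
        refine Finset.sum_congr rfl fun k _ => ?_
        rw [pow_add]; ring
    _ = ∑ k ∈ Finset.range (v + 1),
          ((-1 : F) ^ k * (v.choose k : F)) * ∑ x : F, x ^ (u + k) := by
        rw [Finset.sum_comm]
        exact Finset.sum_congr rfl fun k _ => (Finset.mul_sum _ _ _).symm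
    _ = 0 := by
        refine Finset.sum_eq_zero fun k hk => ?_
        have hkle : k ≤ v := by have := Finset.mem_range.mp hk; omega
        rw [FiniteField.sum_pow_lt_card_sub_one F (u + k) (by rw [hq]; omega), mul_zero]

/-- Let `q = p^n` be an odd prime power, `K = ℚ(ζ_{q-1}, ζ_p)` (formalized as
a number field containing primitive `(q-1)`-th and `p`-th roots of unity), `𝔭` a prime ideal
of `𝒪_K` above `p` with `𝒪_K/𝔭 ≅ F_q`, and `χ_𝔭` the Teichmüller character of `𝔭`
(so `χ_𝔭(x) ≡ x (mod 𝔭)`; it generates the character group, and `χ_𝔭^{-a} = χ_𝔭^{q-1-a}`).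
For `1 ≤ a, b ≤ q-2`: `J_q(χ_𝔭^{-a}, χ_𝔭^{-b}) ≡ -binom(a+b, a) (mod 𝔭)`, and in
particular if `a + b ≥ q` then `J_q(χ_𝔭^{-a}, χ_𝔭^{-b}) ≡ 0 (mod 𝔭)`. -/
theorem jacobiSum_teichmuller_congruence (p n q : ℕ) [Fact p.Prime] (hp : Odd p)
    (hn : 0 < n) (hq : q = p ^ n)
    (K : Type*) [Field K] [NumberField K]
    (hζq : ∃ z : K, IsPrimitiveRoot z (q - 1)) (hζp : ∃ z : K, IsPrimitiveRoot z p)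
    (𝔭 : Ideal (NumberField.RingOfIntegers K)) [𝔭.IsPrime]
    (hp𝔭 : (p : NumberField.RingOfIntegers K) ∈ 𝔭)
    [Fintype (NumberField.RingOfIntegers K ⧸ 𝔭)]
    (hcard : Fintype.card (NumberField.RingOfIntegers K ⧸ 𝔭) = q)
    (χ : MulChar (NumberField.RingOfIntegers K ⧸ 𝔭) (NumberField.RingOfIntegers K))
    (hχ : ∀ x : NumberField.RingOfIntegers K ⧸ 𝔭, Ideal.Quotient.mk 𝔭 (χ x) = x)
    (a b : ℕ) (ha1 : 1 ≤ a) (ha2 : a ≤ q - 2) (hb1 : 1 ≤ b) (hb2 : b ≤ q - 2) :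
    Ideal.Quotient.mk 𝔭 (jacobiSum (χ ^ (q - 1 - a)) (χ ^ (q - 1 - b)))
        = -(((a + b).choose a : ℕ) : NumberField.RingOfIntegers K ⧸ 𝔭)
      ∧ (q ≤ a + b →
          Ideal.Quotient.mk 𝔭 (jacobiSum (χ ^ (q - 1 - a)) (χ ^ (q - 1 - b))) = 0) := by
  have hpprime : p.Prime := Fact.out
  have hp2 : p ≠ 2 := by rintro rfl; exact (by norm_num : ¬ Odd 2) hp
  have hp3 : 3 ≤ p := by have := hpprime.two_le; omega
  have hq3 : 3 ≤ q := by
    subst hq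
    calc 3 ≤ p := hp3
      _ ≤ p ^ n := Nat.le_self_pow (by omega) p
  have hqodd : Odd q := hq ▸ hp.pow
  have hbot : 𝔭 ≠ ⊥ := by
    intro h
    have hzero : (p : NumberField.RingOfIntegers K) = 0 := by
      rwa [h, Ideal.mem_bot] at hp𝔭
    exact (Nat.cast_ne_zero.mpr hpprime.ne_zero) hzero
  haveI : 𝔭.IsMaximal := Ideal.IsPrime.isMaximal ‹_› hbot
  letI : Field (NumberField.RingOfIntegers K ⧸ 𝔭) := Ideal.Quotient.field 𝔭
  have hu0 : q - 1 - a ≠ 0 := by omega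
  have hv0 : q - 1 - b ≠ 0 := by omega
  have hmk : Ideal.Quotient.mk 𝔭 (jacobiSum (χ ^ (q - 1 - a)) (χ ^ (q - 1 - b)))
      = ∑ x : NumberField.RingOfIntegers K ⧸ 𝔭, x ^ (q - 1 - a) * (1 - x) ^ (q - 1 - b) := by
    rw [jacobiSum, map_sum]
    refine Finset.sum_congr rfl fun x _ => ?_
    rw [map_mul, MulChar.pow_apply' _ hu0, MulChar.pow_apply' _ hv0, map_pow, map_pow, hχ, hχ]
  constructor
  · rw [hmk]
    exact field_sum_eq hcard hqodd ha1 ha2 hb1 hb2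
  · intro hab
    rw [hmk]
    exact field_sum_eq_zero hcard ha1 ha2 hb1 hb2 hab
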